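/- Let H be a Hopf algebra over a field k and let J ⊆ J′ be two primitive ideals of H. Then g_J = g_{J′} in the chain group C(H), where g_J denotes the generator of C(H) attached to any simple H-module with annihilator J. -/

import Mathlib

open TensorProduct

noncomputable section

namespace Paper

universe u

section TensorDual

variable (k : Type*) [CommSemiring k]
variable (A : Type*) [Semiring A] [Algebra k A]
variable (M N : Type*) [AddCommMonoid M] [Module k M] [Module A M]
  [IsScalarTower k A M] [SMulCommClass k A M]
  [AddCommMonoid N] [Module k N] [Module A N] [IsScalarTower k A N] [SMulCommClass k A N]

/-- The representation of `A ⊗[k] A` on `M ⊗[k] N`. -/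
def tensorRep : A ⊗[k] A →ₐ[k] Module.End k (M ⊗[k] N) :=
  (Module.endTensorEndAlgHom (R := k) (S := k) (A := k) (M := M) (N := N)).comp
    (Algebra.TensorProduct.map (Algebra.lsmul k k M) (Algebra.lsmul k k N))

/-- The module structure on `M ⊗[k] N` obtained by letting `A` act through an algebra
map `Δ : A →ₐ[k] A ⊗[k] A` (e.g. the comultiplication of a bialgebra). -/
def diagModule (Δ : A →ₐ[k] A ⊗[k] A) : Module A (M ⊗[k] N) :=
  Module.compHom (M ⊗[k] N) ((tensorRep k A M N).comp Δ).toRingHom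

variable {k A} in
/-- The contragredient representation on the full linear dual, the action being through an
algebra anti-endomorphism `σ` (e.g. the antipode of a Hopf algebra). -/
def dualRep (σ : A →ₐ[k] Aᵐᵒᵖ) : A →ₐ[k] Module.End k (Module.Dual k M) where
  toFun a := ((Algebra.lsmul k k M) (σ a).unop).dualMap
  map_one' := by
    ext φ v
    simp [LinearMap.dualMap_apply]
  map_mul' a b := by
    ext φ v
    simp [LinearMap.dualMap_apply, MulOpposite.unop_mul, map_mul, Module.End.mul_apply]
  map_zero' := by
    ext φ v
    simp [LinearMap.dualMap_apply]
  map_add' a b := by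
    ext φ v
    simp [LinearMap.dualMap_apply, MulOpposite.unop_add, map_add, LinearMap.add_apply]
  commutes' r := by
    ext φ v
    simp [LinearMap.dualMap_apply, Module.algebraMap_end_apply]

variable {k A} in
/-- The module structure on the full linear dual `M*` of a module `M`, with the action through
an algebra anti-endomorphism `σ` : `(a • f) v = f (σ a • v)`. -/
def dualModule (σ : A →ₐ[k] Aᵐᵒᵖ) : Module A (Module.Dual k M) :=
  Module.compHom (Module.Dual k M) (dualRep M σ).toRingHom

end TensorDual

section Chain

variable (k : Type u) [Field k]
variable (A : Type u) [Ring A] [Algebra k A]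

/-- A bundled simple left `A`-module (for an algebra `A` over a field `k`),
together with its (automatically unique) compatible `k`-vector space structure. -/
structure SimpleMod where
  carrier : Type u
  [acg : AddCommGroup carrier]
  [modk : Module k carrier]
  [modA : Module A carrier]
  [tower : IsScalarTower k A carrier]
  [scc : SMulCommClass k A carrier]
  [simple : IsSimpleModule A carrier]

attribute [instance] SimpleMod.acg SimpleMod.modk SimpleMod.modA SimpleMod.tower
  SimpleMod.scc SimpleMod.simple

variable {k A}

/-- Isomorphism of simple modules. -/
def simpleModSetoid : Setoid (SimpleMod k A) where
  r M N := Nonempty (M.carrier ≃ₗ[A] N.carrier)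
  iseqv := ⟨fun _ => ⟨LinearEquiv.refl _ _⟩, fun ⟨e⟩ => ⟨e.symm⟩,
    fun ⟨e⟩ ⟨f⟩ => ⟨e.trans f⟩⟩

/-- The type of isomorphism classes of simple left `A`-modules. -/
def SimpleModClass (k A : Type u) [Field k] [Ring A] [Algebra k A] : Type (u + 1) :=
  Quotient (simpleModSetoid (k := k) (A := A))

/-- The annihilator of (the module underlying) a simple module. -/
def ann (M : SimpleMod k A) : Set A := (Module.annihilator A M.carrier : Ideal A)

/-- The annihilator of a tensor product of two modules, the algebra acting diagonally through
the comultiplication `Δ`. -/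
def tensorAnn (Δ : A →ₐ[k] A ⊗[k] A) (M N : SimpleMod k A) : Set A :=
  letI : Module A (M.carrier ⊗[k] N.carrier) := diagModule k A M.carrier N.carrier Δ
  (Module.annihilator A (M.carrier ⊗[k] N.carrier) : Ideal A)

/-- The annihilator of the dual (contragredient) module of `M`: the set of elements `a` whose
action on every functional `φ` (namely `v ↦ φ (σ a • v)`, where `σ` is the antipode) is zero. -/
def dualAnn (σ : A → A) (M : SimpleMod k A) : Set A :=
  {a : A | ∀ (φ : Module.Dual k M.carrier) (v : M.carrier), φ (σ a • v) = 0}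

variable (k A) in
/-- The relators defining the chain group of `A` (with respect to comultiplication `Δ`,
antipode `σ` and counit `ε`): one generator per isomorphism class of simple
`A`-modules; `g ε = 1` for the trivial module `ε`; `g M = g M' * g M''` whenever `M` is weakly
contained in `M' ⊗ M''`; and `g P = (g M)⁻¹` whenever `P` is weakly contained in the
dual of `M`. -/
def chainRels (Δ : A →ₐ[k] A ⊗[k] A) (σ : A → A) (ε : A →ₐ[k] k) :
    Set (FreeGroup (SimpleModClass k A)) :=
  {w | ∃ M : SimpleMod k A,
      (∀ (a : A) (v : M.carrier), a • v = ε a • v) ∧ w = FreeGroup.of ⟦M⟧} ∪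
  {w | ∃ M M' M'' : SimpleMod k A, tensorAnn Δ M' M'' ⊆ ann M ∧
      w = FreeGroup.of ⟦M⟧ * (FreeGroup.of ⟦M'⟧ * FreeGroup.of ⟦M''⟧)⁻¹} ∪
  {w | ∃ P M : SimpleMod k A, dualAnn σ M ⊆ ann P ∧
      w = FreeGroup.of ⟦P⟧ * FreeGroup.of ⟦M⟧}

variable (k A) in
/-- The chain group of `A` (with respect to the given comultiplication, antipode and counit),
presented by generators and relations. -/
def ChainGroup (Δ : A →ₐ[k] A ⊗[k] A) (σ : A → A) (ε : A →ₐ[k] k) : Type (u + 1) :=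
  PresentedGroup (chainRels k A Δ σ ε)

instance (Δ : A →ₐ[k] A ⊗[k] A) (σ : A → A) (ε : A →ₐ[k] k) :
    Group (ChainGroup k A Δ σ ε) :=
  inferInstanceAs (Group (PresentedGroup _))

/-- The generator of the chain group attached to a simple module. -/
def gen (Δ : A →ₐ[k] A ⊗[k] A) (σ : A → A) (ε : A →ₐ[k] k) (M : SimpleMod k A) :
    ChainGroup k A Δ σ ε :=
  PresentedGroup.of ⟦M⟧

end Chain

end Paper

end

open Paper in
universe u in
/-- If `J ⊆ J'` are primitive ideals of a Hopf algebra `H` over a field, then the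
chain-group generators attached to simple modules with annihilators `J` and `J'` coincide. -/
theorem gen_eq_gen_of_primitive_le
    (k H : Type u) [Field k] [Ring H] [HopfAlgebra k H]
    (J J' : Ideal H)
    (hJ : ∃ M : SimpleMod k H, Module.annihilator H M.carrier = J)
    (hJ' : ∃ M : SimpleMod k H, Module.annihilator H M.carrier = J')
    (hle : J ≤ J') :
    ∀ M M' : SimpleMod k H,
      Module.annihilator H M.carrier = J → Module.annihilator H M'.carrier = J' →
      gen (Bialgebra.comulAlgHom k H) (fun a => HopfAlgebra.antipode (R := k) a)
          (Bialgebra.counitAlgHom k H) M =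
        gen (Bialgebra.comulAlgHom k H) (fun a => HopfAlgebra.antipode (R := k) a)
          (Bialgebra.counitAlgHom k H) M' := by
  clear hJ hJ'
  intro M M' hM hM'
  set Δ := Bialgebra.comulAlgHom k H with hΔ
  set σ : H → H := fun a => HopfAlgebra.antipode (R := k) a with hσ
  set ε := Bialgebra.counitAlgHom k H with hε
  -- the trivial one-dimensional module
  letI modH : Module H k := Module.compHom k ε.toRingHom
  haveI towerk : IsScalarTower k H k := by
    constructor
    intro c a x
    show ε (c • a) * x = c * (ε a * x)
    rw [map_smul, smul_eq_mul, mul_assoc]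
  haveI scck : SMulCommClass k H k := by
    constructor
    intro c a x
    show c * (ε a * x) = ε a * (c * x)
    ring
  haveI simplek : IsSimpleModule H k := by
    rw [isSimpleModule_iff]; constructor
    intro N
    rcases eq_or_ne N ⊥ with h | h
    · exact Or.inl h
    · right
      obtain ⟨x, hxN, hx0⟩ := Submodule.exists_mem_ne_zero_of_ne_bot h
      rw [Submodule.eq_top_iff']
      intro y
      have : (algebraMap k H (y * x⁻¹)) • x = y := by
        show ε (algebraMap k H (y * x⁻¹)) * x = y
        rw [AlgHom.commutes, Algebra.algebraMap_self_apply, mul_assoc, inv_mul_cancel₀ hx0, mul_one]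
      exact this ▸ N.smul_mem _ hxN
  let E : SimpleMod k H := { carrier := k }
  have hEsmul : ∀ (a : H) (x : k), a • x = ε a * x := fun a x => rfl
  -- the generator of the trivial module is 1
  have hE1 : (PresentedGroup.mk (chainRels k H Δ σ ε) (FreeGroup.of ⟦E⟧) :
      ChainGroup k H Δ σ ε) = 1 := by
    apply (QuotientGroup.eq_one_iff _).2
    apply Subgroup.subset_normalClosure
    left; left
    exact ⟨E, fun a v => by rw [hEsmul a v, smul_eq_mul], rfl⟩
  -- tensorAnn Δ M E ⊆ ann M
  have key : tensorAnn Δ M E ⊆ ann M' := by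
    intro a ha
    have ha' : ∀ t : M.carrier ⊗[k] E.carrier,
        tensorRep k H M.carrier E.carrier (Δ a) t = 0 := by
      letI : Module H (M.carrier ⊗[k] E.carrier) :=
        diagModule k H M.carrier E.carrier Δ
      exact fun t => Module.mem_annihilator.1 ha t
    -- conclude a annihilates M
    have haM : a ∈ Module.annihilator H M.carrier := by
      rw [Module.mem_annihilator]
      intro v
      have claim : ∀ t : H ⊗[k] H,
          (TensorProduct.rid k M.carrier)
              (tensorRep k H M.carrier E.carrier t (v ⊗ₜ (1 : k)))
            = ((TensorProduct.rid k H)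
                ((LinearMap.lTensor H ε.toLinearMap) t)) • v := by
        intro t
        induction t using TensorProduct.induction_on with
        | zero => simp
        | tmul x y =>
            have h1 : tensorRep k H M.carrier E.carrier (x ⊗ₜ y) (v ⊗ₜ (1 : k))
                = (x • v) ⊗ₜ (y • (1 : k)) := rfl
            rw [h1, hEsmul y 1, mul_one]
            simp only [LinearMap.lTensor_tmul, TensorProduct.rid_tmul, AlgHom.toLinearMap_apply]
            rw [smul_assoc]
        | add s t hs ht =>
            simp only [map_add, LinearMap.add_apply, add_smul, hs, ht]
      have h2 := claim (Δ a)
      rw [ha' (v ⊗ₜ (1 : k)), map_zero] at h2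
      have h3 : (LinearMap.lTensor H ε.toLinearMap) (Δ a) = a ⊗ₜ (1 : k) :=
        Coalgebra.lTensor_counit_comul (R := k) a
      rw [h3] at h2
      simpa using h2.symm
    rw [hM] at haM
    have : a ∈ J' := hle haM
    rw [ann, hM']
    exact this
  -- the tensor relation: g_{M'} = g_M * g_E
  have hrel : (PresentedGroup.mk (chainRels k H Δ σ ε)
      (FreeGroup.of ⟦M'⟧ * (FreeGroup.of ⟦M⟧ * FreeGroup.of ⟦E⟧)⁻¹) :
      ChainGroup k H Δ σ ε) = 1 := by
    apply (QuotientGroup.eq_one_iff _).2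
    apply Subgroup.subset_normalClosure
    left; right
    exact ⟨M', M, E, key, rfl⟩
  have hgen : ∀ N : SimpleMod k H, gen Δ σ ε N
      = PresentedGroup.mk (chainRels k H Δ σ ε) (FreeGroup.of ⟦N⟧) := fun _ => rfl
  rw [hgen, hgen]
  erw [map_mul, map_inv, map_mul, hE1, mul_one, mul_inv_eq_one] at hrel
  exact hrel.symm
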